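/- For every non-regular language L over a finite nonempty alphabet Σ there exists an infinite word a₁a₂a₃⋯ ∈ Σ^ω (i.e., a function a : ℕ → Σ) such that the left quotients of L by distinct finite prefixes are pairwise distinct: for all i ≠ j, (a₁a₂⋯a_i)\L ≠ (a₁a₂⋯a_j)\L. -/

import Mathlib

/-- The left quotient of `L` by the word `u`: `u \ L = {v | u · v ∈ L}`. -/
def leftQuotient {α : Type} (u : List α) (L : Set (List α)) : Set (List α) :=
  {v | u ++ v ∈ L}

namespace DistinctQuot

variable {σ : Type} [Fintype σ] [Nonempty σ] (L : Language σ)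

lemma leftQuotient_append (u v : List σ) :
    leftQuotient (u ++ v) L = leftQuotient v (leftQuotient u L) := by
  ext x; simp [leftQuotient, List.append_assoc]

/-- Myhill–Nerode easy direction: finitely many quotients implies regular. -/
lemma regular_of_finite
    (h : (Set.range fun u : List σ => leftQuotient u L).Finite) : L.IsRegular := by
  classical
  haveI : Fintype (Set.range fun u : List σ => leftQuotient u L) := h.fintype
  let M : DFA σ (Set.range fun u : List σ => leftQuotient u L) :=
    { step := fun s a => ⟨leftQuotient [a] s.1, by
        obtain ⟨u, hu⟩ := s.2
        exact ⟨u ++ [a], by simpa [leftQuotient_append] using congrArg (leftQuotient [a]) hu⟩⟩,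
      start := ⟨leftQuotient [] L, ⟨[], rfl⟩⟩,
      accept := {s | [] ∈ s.1} }
  refine ⟨_, inferInstance, M, ?_⟩
  have key : ∀ (w : List σ) (s), (M.evalFrom s w).1 = leftQuotient w s.1 := by
    intro w
    induction w with
    | nil => intro s; simp [leftQuotient]; rfl
    | cons a t ih =>
        intro s
        have h1 : (a :: t) = [a] ++ t := rfl
        rw [h1, leftQuotient_append (L := s.1)]
        exact ih (M.step s a)
  ext w
  rw [DFA.mem_accepts]
  show (M.evalFrom M.start w) ∈ M.accept ↔ _
  have hk := key w M.start
  change [] ∈ (M.evalFrom M.start w).1 ↔ _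
  rw [hk]
  simp [leftQuotient]
  rfl

/-- Canonical words: shortest representatives of their quotient. -/
def Canon : Set (List σ) :=
  {u | ∀ v : List σ, leftQuotient v L = leftQuotient u L → u.length ≤ v.length}

lemma canon_of_prefix {u w : List σ} (hw : w ∈ Canon L) (huw : u <+: w) :
    u ∈ Canon L := by
  obtain ⟨t, rfl⟩ := huw
  intro v hv
  have hvt : leftQuotient (v ++ t) L = leftQuotient (u ++ t) L := by
    rw [leftQuotient_append, leftQuotient_append, hv]
  have := hw (v ++ t) hvt
  simp only [List.length_append] at this
  omega

lemma canon_infinite (hL : ¬ L.IsRegular) : (Canon L).Infinite := by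
  classical
  intro hfin
  apply hL
  apply regular_of_finite
  have : (Set.range fun u : List σ => leftQuotient u L) ⊆
      (fun u => leftQuotient u L) '' Canon L := by
    rintro Q ⟨u, rfl⟩
    have hex : ∃ n : ℕ, ∃ v : List σ, v.length = n ∧
        leftQuotient v L = leftQuotient u L := ⟨u.length, u, rfl, rfl⟩
    obtain ⟨v, hvlen, hvq⟩ := Nat.find_spec hex
    refine ⟨v, ?_, hvq⟩
    intro v' hv'
    have : Nat.find hex ≤ v'.length :=
      Nat.find_le ⟨v', rfl, hv'.trans hvq⟩
    omega
  exact ((hfin.image _).subset this)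

/-- A word is good if it is canonical and has infinitely many canonical extensions. -/
def Good (u : List σ) : Prop :=
  u ∈ Canon L ∧ {w ∈ Canon L | u <+: w}.Infinite

lemma good_nil (hL : ¬ L.IsRegular) : Good L [] := by
  constructor
  · intro v _; simp
  · have : {w ∈ Canon L | ([] : List σ) <+: w} = Canon L := by
      ext w; simp [List.nil_prefix]
    rw [this]
    exact canon_infinite L hL

lemma good_step {u : List σ} (hu : Good L u) : ∃ a : σ, Good L (u ++ [a]) := by
  have hinf : ({w ∈ Canon L | u <+: w} \ {u}).Infinite :=
    hu.2.diff (Set.finite_singleton u)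
  have hsub : ({w ∈ Canon L | u <+: w} \ {u}) ⊆
      ⋃ a : σ, {w ∈ Canon L | u ++ [a] <+: w} := by
    rintro w ⟨⟨hwc, t, rfl⟩, hne⟩
    have ht : t ≠ [] := by
      intro h; subst h; simp at hne
    obtain ⟨a, t', rfl⟩ := List.exists_cons_of_ne_nil ht
    refine Set.mem_iUnion.2 ⟨a, hwc, ⟨t', by simp⟩⟩
  have : (⋃ a : σ, {w ∈ Canon L | u ++ [a] <+: w}).Infinite :=
    hinf.mono hsub
  obtain ⟨a, ha⟩ : ∃ a : σ, {w ∈ Canon L | u ++ [a] <+: w}.Infinite := by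
    by_contra hcon
    push_neg at hcon
    exact this (Set.finite_iUnion hcon)
  obtain ⟨w, hwc, hwp⟩ := ha.nonempty
  exact ⟨a, canon_of_prefix L hwc hwp, ha⟩

open Classical in
/-- The chosen next letter. -/
noncomputable def nextLetter (u : List σ) : σ :=
  if h : ∃ a : σ, Good L (u ++ [a]) then h.choose else Classical.arbitrary σ

/-- The sequence of prefixes. -/
noncomputable def pref : ℕ → List σ
  | 0 => []
  | n + 1 => pref n ++ [nextLetter L (pref n)]

lemma good_pref (hL : ¬ L.IsRegular) (n : ℕ) : Good L (pref L n) := by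
  induction n with
  | zero => exact good_nil L hL
  | succ n ih =>
      have h : ∃ a : σ, Good L (pref L n ++ [a]) := good_step L ih
      show Good L (pref L n ++ [nextLetter L (pref L n)])
      rw [nextLetter, dif_pos h]
      exact h.choose_spec

lemma pref_length (n : ℕ) : (pref L n).length = n := by
  induction n with
  | zero => rfl
  | succ n ih => simp [pref, ih]

end DistinctQuot

/-- For every non-regular language `L` over a finite nonempty alphabet `σ` there is an
infinite word `a : ℕ → σ` whose distinct finite prefixes have pairwise distinct
left quotients of `L`. -/
theorem exists_infinite_word_with_distinct_quotients
    {σ : Type} [Fintype σ] [Nonempty σ] (L : Language σ)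
    (hL : ¬ L.IsRegular) :
    ∃ a : ℕ → σ, ∀ i j : ℕ, i ≠ j →
      leftQuotient ((List.range i).map a) L ≠ leftQuotient ((List.range j).map a) L := by
  refine ⟨fun n => DistinctQuot.nextLetter L (DistinctQuot.pref L n), ?_⟩
  have hmap : ∀ i : ℕ, (List.range i).map
      (fun n => DistinctQuot.nextLetter L (DistinctQuot.pref L n)) =
      DistinctQuot.pref L i := by
    intro i
    induction i with
    | zero => rfl
    | succ i ih =>
        rw [List.range_succ, List.map_append, ih]
        rfl
  intro i j hij heq
  rw [hmap, hmap] at heq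
  have hi := (DistinctQuot.good_pref L hL i).1 (DistinctQuot.pref L j) heq.symm
  have hj := (DistinctQuot.good_pref L hL j).1 (DistinctQuot.pref L i) heq
  rw [DistinctQuot.pref_length, DistinctQuot.pref_length] at hi hj
  omega
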